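/- The set { ρ ∈ ℝ^N : Σ(ρ) is positive definite } is a convex subset of ℝ^N. -/

import Mathlib

open Matrix

/-- The K×K covariance matrix `Σ(ρ)`. -/
noncomputable def SigmaMat {I K : ℕ} (n : Fin I → ℕ)
    (q : (i : Fin I) → Fin (n i) → Fin K → ℝ)
    (ρ : (i : Fin I) → Fin (n i) → ℝ) : Matrix (Fin K) (Fin K) ℝ :=
  Matrix.of fun k l => ∑ i, ((∑ j, q i j k * q i j l * ρ i j)
    - (∑ j, q i j k * ρ i j) * (∑ j, q i j l * ρ i j))

lemma quad_inner {J K : Type*} [Fintype J] [Fintype K]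
    (q : J → K → ℝ) (ρ : J → ℝ) (x : K → ℝ) :
    ∑ k, x k * (∑ l, ((∑ j, q j k * q j l * ρ j)
        - (∑ j, q j k * ρ j) * (∑ j, q j l * ρ j)) * x l)
    = (∑ j, (∑ k, q j k * x k)^2 * ρ j) - (∑ j, (∑ k, q j k * x k) * ρ j)^2 := by
  have hcross : (∑ j, (∑ k, q j k * x k) * ρ j) = ∑ k, x k * (∑ j, q j k * ρ j) := by
    simp only [Finset.sum_mul, Finset.mul_sum]
    rw [Finset.sum_comm]
    exact Finset.sum_congr rfl fun k _ => Finset.sum_congr rfl fun j _ => by ring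
  have hA : ∑ k, ∑ l, x k * ((∑ j, q j k * q j l * ρ j) * x l)
      = ∑ j, (∑ k, q j k * x k)^2 * ρ j := by
    have step : ∀ k, ∑ l, x k * ((∑ j, q j k * q j l * ρ j) * x l)
        = ∑ j, ∑ l, x k * (q j k * q j l * ρ j) * x l := by
      intro k
      rw [Finset.sum_comm]
      refine Finset.sum_congr rfl fun l _ => ?_
      simp only [Finset.sum_mul, Finset.mul_sum]
      exact Finset.sum_congr rfl fun j _ => by ring
    simp only [step]
    rw [Finset.sum_comm]
    refine Finset.sum_congr rfl fun j _ => ?_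
    rw [sq, Finset.sum_mul_sum, Finset.sum_mul]
    refine Finset.sum_congr rfl fun k _ => ?_
    rw [Finset.sum_mul]
    exact Finset.sum_congr rfl fun l _ => by ring
  have hB : ∑ k, ∑ l, x k * ((∑ j, q j k * ρ j) * (∑ j, q j l * ρ j) * x l)
      = (∑ j, (∑ k, q j k * x k) * ρ j)^2 := by
    rw [hcross, sq, Finset.sum_mul_sum]
    exact Finset.sum_congr rfl fun k _ => Finset.sum_congr rfl fun l _ => by ring
  calc ∑ k, x k * (∑ l, ((∑ j, q j k * q j l * ρ j)
          - (∑ j, q j k * ρ j) * (∑ j, q j l * ρ j)) * x l)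
      = ∑ k, (∑ l, x k * ((∑ j, q j k * q j l * ρ j) * x l)
          - ∑ l, x k * ((∑ j, q j k * ρ j) * (∑ j, q j l * ρ j) * x l)) := by
        refine Finset.sum_congr rfl fun k _ => ?_
        rw [← Finset.sum_sub_distrib, Finset.mul_sum]
        exact Finset.sum_congr rfl fun l _ => by ring
    _ = _ := by rw [Finset.sum_sub_distrib, hA, hB]

lemma sigma_quad {I K : ℕ} (n : Fin I → ℕ)
    (q : (i : Fin I) → Fin (n i) → Fin K → ℝ)
    (ρ : (i : Fin I) → Fin (n i) → ℝ) (x : Fin K → ℝ) :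
    dotProduct x ((SigmaMat n q ρ) *ᵥ x)
      = ∑ i, ((∑ j, (∑ k, q i j k * x k)^2 * ρ i j)
          - (∑ j, (∑ k, q i j k * x k) * ρ i j)^2) := by
  have h0 : dotProduct x ((SigmaMat n q ρ) *ᵥ x)
      = ∑ k, x k * (∑ l, (∑ i, ((∑ j, q i j k * q i j l * ρ i j)
          - (∑ j, q i j k * ρ i j) * (∑ j, q i j l * ρ i j))) * x l) := by
    simp [dotProduct, mulVec, SigmaMat]
  rw [h0]
  have h1 : ∀ k, x k * (∑ l, (∑ i, ((∑ j, q i j k * q i j l * ρ i j)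
        - (∑ j, q i j k * ρ i j) * (∑ j, q i j l * ρ i j))) * x l)
      = ∑ i, x k * (∑ l, ((∑ j, q i j k * q i j l * ρ i j)
        - (∑ j, q i j k * ρ i j) * (∑ j, q i j l * ρ i j)) * x l) := by
    intro k
    simp only [Finset.sum_mul, Finset.mul_sum]
    rw [Finset.sum_comm]
  simp only [h1]
  rw [Finset.sum_comm]
  exact Finset.sum_congr rfl fun i _ => quad_inner (q i) (ρ i) x

/-- the set `{ ρ ∈ ℝ^N : Σ(ρ) is positive definite }` is convex. -/
theorem stmt5 {I K : ℕ} (n : Fin I → ℕ)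
    (q : (i : Fin I) → Fin (n i) → Fin K → ℝ) :
    Convex ℝ {ρ : (i : Fin I) → Fin (n i) → ℝ | (SigmaMat n q ρ).PosDef} := by
  intro ρ hρ σ hσ a b ha hb hab
  have herm : ∀ τ : (i : Fin I) → Fin (n i) → ℝ, (SigmaMat n q τ).IsHermitian := by
    intro τ
    ext k l
    simp only [conjTranspose_apply, star_trivial, SigmaMat, of_apply]
    refine Finset.sum_congr rfl fun i _ => ?_
    have : (∑ j, q i j l * q i j k * τ i j) = ∑ j, q i j k * q i j l * τ i j :=
      Finset.sum_congr rfl fun j _ => by ring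
    rw [this]; ring
  refine PosDef.of_dotProduct_mulVec_pos (herm _) fun x hx => ?_
  have hstar : star x = x := by simp
  rw [hstar, sigma_quad]
  have hρ' : 0 < ∑ i, ((∑ j, (∑ k, q i j k * x k)^2 * ρ i j)
      - (∑ j, (∑ k, q i j k * x k) * ρ i j)^2) := by
    have := hρ.dotProduct_mulVec_pos hx; rwa [hstar, sigma_quad] at this
  have hσ' : 0 < ∑ i, ((∑ j, (∑ k, q i j k * x k)^2 * σ i j)
      - (∑ j, (∑ k, q i j k * x k) * σ i j)^2) := by
    have := hσ.dotProduct_mulVec_pos hx; rwa [hstar, sigma_quad] at this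
  set c : (i : Fin I) → Fin (n i) → ℝ := fun i j => ∑ k, q i j k * x k with hc
  have key : ∀ i, a * ((∑ j, c i j^2 * ρ i j) - (∑ j, c i j * ρ i j)^2)
      + b * ((∑ j, c i j^2 * σ i j) - (∑ j, c i j * σ i j)^2)
      ≤ (∑ j, c i j^2 * ((a • ρ + b • σ) i j))
      - (∑ j, c i j * ((a • ρ + b • σ) i j))^2 := by
    intro i
    have hA : (∑ j, c i j^2 * ((a • ρ + b • σ) i j))
        = a * (∑ j, c i j^2 * ρ i j) + b * (∑ j, c i j^2 * σ i j) := by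
      simp only [Pi.add_apply, Pi.smul_apply, smul_eq_mul, Finset.mul_sum,
        ← Finset.sum_add_distrib]
      exact Finset.sum_congr rfl fun j _ => by ring
    have hBlin : (∑ j, c i j * ((a • ρ + b • σ) i j))
        = a * (∑ j, c i j * ρ i j) + b * (∑ j, c i j * σ i j) := by
      simp only [Pi.add_apply, Pi.smul_apply, smul_eq_mul, Finset.mul_sum,
        ← Finset.sum_add_distrib]
      exact Finset.sum_congr rfl fun j _ => by ring
    rw [hA, hBlin]
    nlinarith [sq_nonneg ((∑ j, c i j * ρ i j) - (∑ j, c i j * σ i j)),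
      mul_nonneg ha hb]
  have hsum : a * (∑ i, ((∑ j, c i j^2 * ρ i j) - (∑ j, c i j * ρ i j)^2))
      + b * (∑ i, ((∑ j, c i j^2 * σ i j) - (∑ j, c i j * σ i j)^2))
      ≤ ∑ i, ((∑ j, c i j^2 * ((a • ρ + b • σ) i j))
        - (∑ j, c i j * ((a • ρ + b • σ) i j))^2) := by
    rw [Finset.mul_sum, Finset.mul_sum, ← Finset.sum_add_distrib]
    exact Finset.sum_le_sum fun i _ => key i
  have hpos : 0 < a * (∑ i, ((∑ j, c i j^2 * ρ i j) - (∑ j, c i j * ρ i j)^2))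
      + b * (∑ i, ((∑ j, c i j^2 * σ i j) - (∑ j, c i j * σ i j)^2)) := by
    rcases ha.lt_or_eq with h | h
    · exact add_pos_of_pos_of_nonneg (mul_pos h hρ') (mul_nonneg hb hσ'.le)
    · have hb1 : b = 1 := by linarith
      rw [← h, hb1]; simpa using hσ'
  exact lt_of_lt_of_le hpos hsum
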